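/- The exponential weighting function r(z) = 1 - (1/z)(1 - z/(e^z - 1)) (with r(0) = 1/2) is monotone increasing on ℝ. -/

import Mathlib

noncomputable def rExp (z : ℝ) : ℝ :=
  if z = 0 then 1/2 else 1 - (1/z) * (1 - z / (Real.exp z - 1))

open Real

/-- auxiliary: 1 + (z-1)e^z ≥ 0 -/
lemma aux_phi_nonneg (z : ℝ) : 0 ≤ 1 + (z - 1) * Real.exp z := by
  have h := Real.add_one_le_exp (-z)
  have hz := Real.exp_pos z
  have : (-z + 1) * Real.exp z ≤ Real.exp (-z) * Real.exp z :=
    mul_le_mul_of_nonneg_right h hz.le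
  rw [← Real.exp_add] at this
  simp at this
  nlinarith

/-- h(z) = 2+z-(2-z)e^z has derivative 1+(z-1)e^z -/
lemma aux_h_deriv (z : ℝ) :
    HasDerivAt (fun z : ℝ => 2 + z - (2 - z) * Real.exp z) (1 + (z - 1) * Real.exp z) z := by
  have h1 : HasDerivAt (fun z : ℝ => 2 + z) 1 z := by
    simpa using (hasDerivAt_id z).const_add 2
  have h2 : HasDerivAt (fun z : ℝ => (2 - z) * Real.exp z)
      ((-1) * Real.exp z + (2 - z) * Real.exp z) z :=
    (((hasDerivAt_id z).const_sub 2)).mul (Real.hasDerivAt_exp z)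
  have := h1.sub h2
  refine this.congr_deriv ?_
  ring

lemma aux_h_mono : Monotone (fun z : ℝ => 2 + z - (2 - z) * Real.exp z) := by
  have hd : ∀ z : ℝ, 0 ≤ deriv (fun z : ℝ => 2 + z - (2 - z) * Real.exp z) z := by
    intro z
    rw [(aux_h_deriv z).deriv]
    exact aux_phi_nonneg z
  exact monotone_of_deriv_nonneg (fun z => (aux_h_deriv z).differentiableAt) hd

lemma aux_h_nonneg {z : ℝ} (hz : 0 ≤ z) : 0 ≤ 2 + z - (2 - z) * Real.exp z := by
  have := aux_h_mono hz
  simpa using this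

lemma aux_h_nonpos {z : ℝ} (hz : z ≤ 0) : 2 + z - (2 - z) * Real.exp z ≤ 0 := by
  have := aux_h_mono hz
  simpa using this

/-- key: (e^z-1)^2 ≥ z^2 e^z -/
lemma aux_key (z : ℝ) : z ^ 2 * Real.exp z ≤ (Real.exp z - 1) ^ 2 := by
  have ht : Real.exp z - 1 = Real.exp (z/2) * (2 * Real.sinh (z/2)) := by
    rw [Real.sinh_eq]
    have h1 : Real.exp (z/2) * Real.exp (-(z/2)) = 1 := by rw [← Real.exp_add]; simp
    have h2 : Real.exp (z/2) * Real.exp (z/2) = Real.exp z := by rw [← Real.exp_add]; ring_nf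
    linear_combination h1 - h2
  have hs : (z/2) ^ 2 ≤ Real.sinh (z/2) ^ 2 := by
    rcases le_or_gt 0 (z/2) with h | h
    · have := Real.self_le_sinh_iff.mpr h
      nlinarith
    · have h' : 0 ≤ -(z/2) := by linarith
      have h2 := Real.self_le_sinh_iff.mpr h'
      rw [Real.sinh_neg] at h2
      nlinarith
  have he : Real.exp z = Real.exp (z/2) * Real.exp (z/2) := by
    rw [← Real.exp_add]; ring_nf
  rw [ht, he]
  nlinarith [Real.exp_pos (z/2), sq_nonneg (Real.exp (z/2))]

lemma aux_exp_ne_one {z : ℝ} (hz : z ≠ 0) : Real.exp z - 1 ≠ 0 := by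
  rcases lt_or_gt_of_ne hz with h | h
  · have := Real.exp_lt_one_iff.mpr h
    intro he; linarith
  · have := Real.add_one_le_exp z
    intro he; linarith

/-- derivative of rExp at z ≠ 0 -/
lemma aux_rExp_hasDeriv {z : ℝ} (hz : z ≠ 0) :
    HasDerivAt rExp ((z^2)⁻¹ - Real.exp z / (Real.exp z - 1)^2) z := by
  have hE : Real.exp z - 1 ≠ 0 := aux_exp_ne_one hz
  have h1 : HasDerivAt (fun y : ℝ => (1:ℝ) - y⁻¹) (-(-(z^2)⁻¹)) z :=
    (hasDerivAt_inv hz).const_sub 1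
  have h2 : HasDerivAt (fun y : ℝ => (Real.exp y - 1)⁻¹)
      (-(Real.exp z) / (Real.exp z - 1)^2) z :=
    ((Real.hasDerivAt_exp z).sub_const 1).inv hE
  have hg : HasDerivAt (fun y : ℝ => 1 - y⁻¹ + (Real.exp y - 1)⁻¹)
      ((z^2)⁻¹ - Real.exp z / (Real.exp z - 1)^2) z := by
    have := h1.add h2
    refine this.congr_deriv ?_
    ring
  apply hg.congr_of_eventuallyEq
  filter_upwards [isOpen_ne.mem_nhds hz] with x hx
  have hEx : Real.exp x - 1 ≠ 0 := aux_exp_ne_one hx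
  rw [rExp, if_neg hx]
  field_simp
  ring

lemma aux_deriv_nonneg {z : ℝ} (hz : z ≠ 0) :
    0 ≤ (z^2)⁻¹ - Real.exp z / (Real.exp z - 1)^2 := by
  have hE : Real.exp z - 1 ≠ 0 := aux_exp_ne_one hz
  have hz2 : (0:ℝ) < z^2 := by positivity
  have hE2 : (0:ℝ) < (Real.exp z - 1)^2 := by positivity
  rw [sub_nonneg, div_le_iff₀ hE2, ← one_div, div_mul_eq_mul_div, le_div_iff₀ hz2]
  have := aux_key z
  nlinarith

lemma aux_mono_Iio : MonotoneOn rExp (Set.Iio (0:ℝ)) := by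
  apply monotoneOn_of_deriv_nonneg (convex_Iio 0)
  · intro x hx
    exact (aux_rExp_hasDeriv (ne_of_lt hx)).differentiableAt.continuousAt.continuousWithinAt
  · rw [interior_Iio]
    intro x hx
    exact (aux_rExp_hasDeriv (ne_of_lt hx)).differentiableAt.differentiableWithinAt
  · rw [interior_Iio]
    intro x hx
    rw [(aux_rExp_hasDeriv (ne_of_lt hx)).deriv]
    exact aux_deriv_nonneg (ne_of_lt hx)

lemma aux_mono_Ioi : MonotoneOn rExp (Set.Ioi (0:ℝ)) := by
  apply monotoneOn_of_deriv_nonneg (convex_Ioi 0)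
  · intro x hx
    exact (aux_rExp_hasDeriv (ne_of_gt hx)).differentiableAt.continuousAt.continuousWithinAt
  · rw [interior_Ioi]
    intro x hx
    exact (aux_rExp_hasDeriv (ne_of_gt hx)).differentiableAt.differentiableWithinAt
  · rw [interior_Ioi]
    intro x hx
    rw [(aux_rExp_hasDeriv (ne_of_gt hx)).deriv]
    exact aux_deriv_nonneg (ne_of_gt hx)

lemma aux_frac {z : ℝ} (hz : z ≠ 0) :
    rExp z - 1/2 = (2 + z - (2 - z) * Real.exp z) / (2 * z * (Real.exp z - 1)) := by
  have hE : Real.exp z - 1 ≠ 0 := aux_exp_ne_one hz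
  rw [rExp, if_neg hz]
  field_simp
  ring

lemma aux_le_half {z : ℝ} (hz : z < 0) : rExp z ≤ 1/2 := by
  have hE : Real.exp z - 1 < 0 := by
    have := Real.exp_lt_one_iff.mpr hz
    linarith
  have hd : 0 < 2 * z * (Real.exp z - 1) := by nlinarith
  have hn := aux_h_nonpos hz.le
  have := div_nonpos_of_nonpos_of_nonneg hn hd.le
  have hfr := aux_frac (ne_of_lt hz)
  linarith [hfr ▸ this]

lemma aux_ge_half {z : ℝ} (hz : 0 < z) : 1/2 ≤ rExp z := by
  have hE : 0 < Real.exp z - 1 := by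
    have := Real.add_one_le_exp z
    linarith
  have hd : 0 < 2 * z * (Real.exp z - 1) := by nlinarith
  have hn := aux_h_nonneg hz.le
  have := div_nonneg hn hd.le
  have hfr := aux_frac (ne_of_gt hz)
  linarith [hfr ▸ this]

theorem stmt_7 : Monotone rExp := by
  have h0 : rExp 0 = 1/2 := by rw [rExp, if_pos rfl]
  intro x y hxy
  rcases lt_trichotomy x 0 with hx | hx | hx
  · rcases lt_trichotomy y 0 with hy | hy | hy
    · exact aux_mono_Iio hx hy hxy
    · rw [hy, h0]; exact aux_le_half hx
    · calc rExp x ≤ 1/2 := aux_le_half hx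
        _ ≤ rExp y := aux_ge_half hy
  · rcases eq_or_lt_of_le (hx ▸ hxy) with hy | hy
    · rw [hx, ← hy]
    · rw [hx, h0]; exact aux_ge_half hy
  · exact aux_mono_Ioi hx (lt_of_lt_of_le hx hxy) hxy
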